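/- Let μ be a probability measure on (Θ, Σ) and let Φ1, Φ2 : Θ → ℝ be μ-essentially bounded measurable functions with 0 < Z_{Φi,μ} < ∞ for i = 1, 2. Then d_TV(μ_{Φ1}, μ_{Φ2}) ≥ (1/2) · min( exp(−‖Φ1‖_{L^∞_μ})/Z_{Φ1,μ}, exp(−‖Φ2‖_{L^∞_μ})/Z_{Φ2,μ} ) · ‖Φ1 − Φ2 + log(Z_{Φ1,μ}/Z_{Φ2,μ})‖_{L¹_μ}. Moreover, if Φ1 − Φ2 is μ-almost surely constant then equality holds (both sides are zero). -/

import Mathlib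

open MeasureTheory Real

namespace PaperStmt

variable {Θ : Type*}

private lemma exp_min_mul_abs_le (x y : ℝ) :
    min (Real.exp x) (Real.exp y) * |x - y| ≤ |Real.exp x - Real.exp y| := by
  wlog h : y ≤ x generalizing x y
  · have := this y x (by linarith)
    rwa [min_comm, abs_sub_comm, abs_sub_comm (Real.exp y)] at this
  rw [min_eq_right (Real.exp_le_exp.2 h), abs_of_nonneg (by linarith),
    abs_of_nonneg (by linarith [Real.exp_le_exp.2 h])]
  have h1 := Real.add_one_le_exp (x - y)
  have h2 : Real.exp y * Real.exp (x - y) = Real.exp x := by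
    rw [← Real.exp_add]; ring_nf
  nlinarith [Real.exp_pos y]

private lemma ae_abs_le_essSup' {Θ : Type*} [MeasurableSpace Θ] {μ : Measure Θ} {Φ : Θ → ℝ}
    (hb : MemLp Φ ⊤ μ) : ∀ᵐ θ ∂μ, |Φ θ| ≤ essSup (fun θ => |Φ θ|) μ := by
  have hne : eLpNormEssSup Φ μ ≠ ⊤ := by
    have := hb.2; rwa [eLpNorm_exponent_top, lt_top_iff_ne_top] at this
  have hC : ∀ᵐ θ ∂μ, |Φ θ| ≤ (eLpNormEssSup Φ μ).toReal := by
    filter_upwards [ae_le_eLpNormEssSup (f := Φ) (μ := μ)] with θ hθ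
    have := ENNReal.toReal_mono hne hθ
    simpa [Real.norm_eq_abs] using this
  exact ae_le_essSup (Filter.isBoundedUnder_of_eventually_le hC)

/-- The evidence `Z_{Φ,μ} = ∫ exp (-Φ) dμ`. -/
noncomputable def evid [MeasurableSpace Θ] (μ : Measure Θ) (Φ : Θ → ℝ) : ℝ :=
  ∫ θ, Real.exp (-(Φ θ)) ∂μ

/-- total variation lower bound for misfit perturbations with
`μ`-essentially bounded misfits, where
`d_TV(μ_{Φ1}, μ_{Φ2}) = (1/2) ∫ |ℓ_{Φ1,μ} - ℓ_{Φ2,μ}| dμ` and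
`‖Φ‖_{L^∞_μ}` is the `μ`-essential supremum of `|Φ|`; equality holds when
`Φ1 - Φ2` is `μ`-a.s. constant. -/
theorem stmt3 [MeasurableSpace Θ] (μ : Measure Θ) [IsProbabilityMeasure μ]
    (Φ1 Φ2 : Θ → ℝ) (hm1 : Measurable Φ1) (hm2 : Measurable Φ2)
    (hb1 : MemLp Φ1 ⊤ μ) (hb2 : MemLp Φ2 ⊤ μ)
    (hint1 : Integrable (fun θ => Real.exp (-(Φ1 θ))) μ)
    (hint2 : Integrable (fun θ => Real.exp (-(Φ2 θ))) μ)
    (hZ1 : 0 < evid μ Φ1) (hZ2 : 0 < evid μ Φ2) :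
    (1 / 2) * min (Real.exp (-essSup (fun θ => |Φ1 θ|) μ) / evid μ Φ1)
              (Real.exp (-essSup (fun θ => |Φ2 θ|) μ) / evid μ Φ2)
          * ∫ θ, |Φ1 θ - Φ2 θ + Real.log (evid μ Φ1 / evid μ Φ2)| ∂μ
      ≤ (1 / 2) * ∫ θ, |Real.exp (-(Φ1 θ)) / evid μ Φ1 - Real.exp (-(Φ2 θ)) / evid μ Φ2| ∂μ
    ∧ ((∃ c : ℝ, ∀ᵐ θ ∂μ, Φ1 θ - Φ2 θ = c) →
        (1 / 2) * min (Real.exp (-essSup (fun θ => |Φ1 θ|) μ) / evid μ Φ1)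
              (Real.exp (-essSup (fun θ => |Φ2 θ|) μ) / evid μ Φ2)
            * ∫ θ, |Φ1 θ - Φ2 θ + Real.log (evid μ Φ1 / evid μ Φ2)| ∂μ
          = (1 / 2) * ∫ θ, |Real.exp (-(Φ1 θ)) / evid μ Φ1
              - Real.exp (-(Φ2 θ)) / evid μ Φ2| ∂μ) := by
  set Z1 := evid μ Φ1
  set Z2 := evid μ Φ2
  set S1 := essSup (fun θ => |Φ1 θ|) μ with hS1def
  set S2 := essSup (fun θ => |Φ2 θ|) μ with hS2def
  set C := min (Real.exp (-S1) / Z1) (Real.exp (-S2) / Z2) with hCdef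
  set k := Real.log (Z1 / Z2) with hkdef
  have hk : k = Real.log Z1 - Real.log Z2 := Real.log_div hZ1.ne' hZ2.ne'
  have hC0 : 0 ≤ C := le_min (by positivity) (by positivity)
  -- pointwise a.e. inequality
  have hptwise : ∀ᵐ θ ∂μ, C * |Φ1 θ - Φ2 θ + k|
      ≤ |Real.exp (-(Φ1 θ)) / Z1 - Real.exp (-(Φ2 θ)) / Z2| := by
    filter_upwards [ae_abs_le_essSup' hb1, ae_abs_le_essSup' hb2] with θ h1 h2
    rw [← hS1def] at h1
    rw [← hS2def] at h2
    set x := -Φ1 θ - Real.log Z1 with hx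
    set y := -Φ2 θ - Real.log Z2 with hy
    have hex : Real.exp x = Real.exp (-(Φ1 θ)) / Z1 := by
      rw [hx, Real.exp_sub, Real.exp_log hZ1]
    have hey : Real.exp y = Real.exp (-(Φ2 θ)) / Z2 := by
      rw [hy, Real.exp_sub, Real.exp_log hZ2]
    have habs : |x - y| = |Φ1 θ - Φ2 θ + k| := by
      rw [hk]; rw [show x - y = -(Φ1 θ - Φ2 θ + (Real.log Z1 - Real.log Z2)) by rw [hx, hy]; ring,
        abs_neg]
    have hx1 : Real.exp (-S1) / Z1 ≤ Real.exp x := by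
      rw [hex]
      gcongr
      linarith [le_abs_self (Φ1 θ)]
    have hx2 : Real.exp (-S2) / Z2 ≤ Real.exp y := by
      rw [hey]
      gcongr
      linarith [le_abs_self (Φ2 θ)]
    have hCle : C ≤ min (Real.exp x) (Real.exp y) := min_le_min hx1 hx2
    calc C * |Φ1 θ - Φ2 θ + k| ≤ min (Real.exp x) (Real.exp y) * |x - y| := by
          rw [habs]; exact mul_le_mul_of_nonneg_right hCle (abs_nonneg _)
      _ ≤ |Real.exp x - Real.exp y| := exp_min_mul_abs_le x y
      _ = |Real.exp (-(Φ1 θ)) / Z1 - Real.exp (-(Φ2 θ)) / Z2| := by rw [hex, hey]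
  -- integrability
  have iΦ1 : Integrable Φ1 μ := hb1.integrable le_top
  have iΦ2 : Integrable Φ2 μ := hb2.integrable le_top
  have intL : Integrable (fun θ => |Φ1 θ - Φ2 θ + k|) μ :=
    ((iΦ1.sub iΦ2).add (integrable_const k)).abs
  have intR : Integrable
      (fun θ => |Real.exp (-(Φ1 θ)) / Z1 - Real.exp (-(Φ2 θ)) / Z2|) μ :=
    ((hint1.div_const Z1).sub (hint2.div_const Z2)).abs
  have main : C * ∫ θ, |Φ1 θ - Φ2 θ + k| ∂μ
      ≤ ∫ θ, |Real.exp (-(Φ1 θ)) / Z1 - Real.exp (-(Φ2 θ)) / Z2| ∂μ := by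
    rw [← integral_const_mul]
    exact integral_mono_ae (intL.const_mul C) intR hptwise
  constructor
  · rw [mul_assoc]
    exact mul_le_mul_of_nonneg_left main (by norm_num)
  · rintro ⟨c, hc⟩
    have hZeq : Z1 = Real.exp (-c) * Z2 := by
      have : Z1 = ∫ θ, Real.exp (-c) * Real.exp (-(Φ2 θ)) ∂μ := by
        refine integral_congr_ae ?_
        filter_upwards [hc] with θ hθ
        rw [← Real.exp_add, show -c + -(Φ2 θ) = -(Φ1 θ) by linarith]
      rw [this, integral_const_mul]; rfl
    have hkc : k = -c := by
      rw [hkdef, hZeq, mul_div_assoc, div_self hZ2.ne', mul_one, Real.log_exp]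
    have hL : ∫ θ, |Φ1 θ - Φ2 θ + k| ∂μ = 0 := by
      rw [integral_eq_zero_of_ae]
      filter_upwards [hc] with θ hθ
      simp [hθ, hkc]
    have hR : ∫ θ, |Real.exp (-(Φ1 θ)) / Z1 - Real.exp (-(Φ2 θ)) / Z2| ∂μ = 0 := by
      rw [integral_eq_zero_of_ae]
      filter_upwards [hc] with θ hθ
      have : Real.exp (-(Φ1 θ)) = Real.exp (-c) * Real.exp (-(Φ2 θ)) := by
        rw [← Real.exp_add, show -c + -(Φ2 θ) = -(Φ1 θ) by linarith]
      rw [hZeq, this, mul_div_mul_left _ _ (Real.exp_ne_zero _)]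
      simp
    rw [hL, hR]; ring

end PaperStmt
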